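/- arXiv:1011.1987 — 2 statements merged into one kernel-verified Lean document; each statement's English description precedes it below -/
import Mathlib

section
/- Let n and N be positive integers, let R > 0 and p > 1, and let Z_{ij} = R·U_{ij}, where the U_{ij} (1 ≤ i ≤ n, 1 ≤ j ≤ N) are i.i.d. random variables with probability density f(u) = (p + 1)u^p on [0, 1]. Let R̃₁ = max_{i,j} Z_{ij}. Then the variance of R̃₁ equals R²·nN(p + 1)/((nN(p + 1) + 1)²·(nN(p + 1) + 2)). -/
open MeasureTheory ProbabilityTheory Real

noncomputable def dens (c : ℝ) : ℝ → ENNReal :=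
  fun u => ENNReal.ofReal ((Set.Icc (0 : ℝ) 1).indicator (fun v => c * v ^ (c - 1)) u)

lemma dens_cont (c : ℝ) (hc : 1 < c) : Continuous fun v : ℝ => c * v ^ (c - 1) :=
  continuous_const.mul (Real.continuous_rpow_const (by linarith))

lemma core_lintegral (c : ℝ) (hc : 1 < c) (m : ℝ) (hm : 0 ≤ m) :
    ∫⁻ v in Set.Icc (0:ℝ) m, ENNReal.ofReal (c * v ^ (c - 1)) = ENNReal.ofReal (m ^ c) := by
  rw [← ofReal_integral_eq_lintegral_ofReal
    ((dens_cont c hc).integrableOn_Icc)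
    ((ae_restrict_mem measurableSet_Icc).mono (fun x hx =>
      mul_nonneg (by linarith) (Real.rpow_nonneg hx.1 _)))]
  congr 1
  rw [integral_Icc_eq_integral_Ioc, ← intervalIntegral.integral_of_le hm,
    intervalIntegral.integral_const_mul, integral_rpow (Or.inl (by linarith))]
  have h1 : c - 1 + 1 = c := by ring
  rw [h1, Real.zero_rpow (by linarith)]
  field_simp
  simp

lemma dens_indicator (c : ℝ) :
    dens c = (Set.Icc (0:ℝ) 1).indicator (fun v => ENNReal.ofReal (c * v ^ (c-1))) := by
  funext u
  by_cases h : u ∈ Set.Icc (0:ℝ) 1 <;> simp [dens, Set.indicator_apply, h]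

lemma dens_Iic (c : ℝ) (hc : 1 < c) (t : ℝ) :
    (volume.withDensity (dens c)) (Set.Iic t) =
      ENNReal.ofReal ((min (max t 0) 1) ^ c) := by
  have hset : Set.Icc (0:ℝ) 1 ∩ Set.Iic t = Set.Icc 0 (min 1 t) := by
    ext x; simp [Set.mem_Icc, Set.mem_Iic, le_min_iff, and_assoc]
  rw [withDensity_apply _ measurableSet_Iic, dens_indicator,
    lintegral_indicator measurableSet_Icc,
    Measure.restrict_restrict measurableSet_Icc, hset]
  rcases le_or_gt 0 t with ht | ht
  · rw [core_lintegral c hc _ (le_min zero_le_one ht)]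
    congr 2
    rw [max_eq_left ht, min_comm]
  · have hmin : min 1 t = t := min_eq_right (by linarith)
    rw [hmin, Set.Icc_eq_empty_of_lt ht, Measure.restrict_empty, lintegral_zero_measure,
      max_eq_right ht.le, min_eq_left zero_le_one, Real.zero_rpow (by linarith),
      ENNReal.ofReal_zero]

lemma dens_prob (c : ℝ) (hc : 1 < c) :
    IsProbabilityMeasure (volume.withDensity (dens c)) := by
  constructor
  rw [withDensity_apply _ MeasurableSet.univ, Measure.restrict_univ, dens_indicator,
    lintegral_indicator measurableSet_Icc, core_lintegral c hc 1 zero_le_one,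
    Real.one_rpow, ENNReal.ofReal_one]

lemma dens_moment (c : ℝ) (hc : 1 < c) (k : ℕ) :
    ∫ x, x ^ k ∂(volume.withDensity (dens c)) = c / (c + k) := by
  have hd : dens c = fun u =>
      ((fun u => (((Set.Icc (0:ℝ) 1).indicator (fun v => c * v ^ (c-1)) u).toNNReal)) u :
        ENNReal) := rfl
  have hmeas : Measurable fun u =>
      (((Set.Icc (0:ℝ) 1).indicator (fun v => c * v ^ (c-1)) u).toNNReal) :=
    (((dens_cont c hc).measurable.indicator measurableSet_Icc)).real_toNNReal
  rw [hd, integral_withDensity_eq_integral_smul hmeas]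
  have hnn : ∀ u, 0 ≤ (Set.Icc (0:ℝ) 1).indicator (fun v => c * v ^ (c-1)) u := by
    intro u
    apply Set.indicator_nonneg
    intro v hv
    exact mul_nonneg (by linarith) (Real.rpow_nonneg hv.1 _)
  have h1 : (fun u : ℝ => (((Set.Icc (0:ℝ) 1).indicator (fun v => c * v ^ (c-1)) u).toNNReal)
      • u ^ k) = fun u => (Set.Icc (0:ℝ) 1).indicator (fun v => c * v ^ (c-1) * v ^ k) u := by
    funext u
    rw [NNReal.smul_def, Real.coe_toNNReal _ (hnn u)]
    by_cases h : u ∈ Set.Icc (0:ℝ) 1 <;> simp [Set.indicator_apply, h]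
  rw [h1, integral_indicator measurableSet_Icc, integral_Icc_eq_integral_Ioc]
  have h2 : ∫ v in Set.Ioc (0:ℝ) 1, c * v ^ (c-1) * v ^ k =
      ∫ v in Set.Ioc (0:ℝ) 1, c * v ^ (c - 1 + k) := by
    apply setIntegral_congr_fun measurableSet_Ioc
    intro v hv
    have hv0 : 0 < v := hv.1
    beta_reduce
    rw [mul_assoc, ← Real.rpow_natCast v k, ← Real.rpow_add hv0]
  rw [h2, ← intervalIntegral.integral_of_le zero_le_one,
    intervalIntegral.integral_const_mul, integral_rpow (Or.inl (by push_cast; linarith))]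
  have h3 : c - 1 + (k:ℝ) + 1 = c + k := by ring
  rw [h3, Real.one_rpow, Real.zero_rpow (by positivity)]
  ring

/-- If `U_{ij}` are i.i.d. with density `f(u) = (p+1)u^p` on `[0,1]` and `Z_{ij} = R·U_{ij}`,
then the variance of the maximum `R̃₁ = max Z_{ij}` equals
`R²·nN(p+1)/((nN(p+1)+1)²·(nN(p+1)+2))`. -/
theorem variance_max_power_density
    {Ω : Type*} [MeasureSpace Ω] [IsProbabilityMeasure (ℙ : Measure Ω)]
    (n N : ℕ) (hn : 0 < n) (hN : 0 < N) (R p : ℝ) (hR : 0 < R) (hp : 1 < p)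
    (U : Fin n × Fin N → Ω → ℝ)
    (hmeas : ∀ ij, Measurable (U ij))
    (hlaw : ∀ ij, Measure.map (U ij) ℙ =
      volume.withDensity
        (fun u => ENNReal.ofReal ((Set.Icc (0 : ℝ) 1).indicator (fun v => (p + 1) * v ^ p) u)))
    (hindep : iIndepFun U ℙ) :
    variance (fun ω => ⨆ ij, R * U ij ω) ℙ =
      R ^ 2 * ((n : ℝ) * N * (p + 1)) /
        (((n : ℝ) * N * (p + 1) + 1) ^ 2 * ((n : ℝ) * N * (p + 1) + 2)) := by
  haveI : Nonempty (Fin n × Fin N) := ⟨(⟨0, hn⟩, ⟨0, hN⟩)⟩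
  set q : ℝ := (n : ℝ) * N * (p + 1) with hqdef
  have hn1 : (1:ℝ) ≤ n := by exact_mod_cast hn
  have hN1 : (1:ℝ) ≤ N := by exact_mod_cast hN
  have hnN : (1:ℝ) ≤ (n:ℝ) * N := by nlinarith
  have hq1 : 1 < q := by rw [hqdef]; nlinarith
  set M : Ω → ℝ := fun ω => ⨆ ij, U ij ω with hMdef
  have hM : Measurable M := Measurable.iSup hmeas
  have hlaw' : ∀ ij, Measure.map (U ij) ℙ = volume.withDensity (dens (p+1)) := by
    intro ij
    rw [hlaw ij]
    congr 1
    funext u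
    simp [dens, add_sub_cancel_right]
  -- the law of the max
  haveI hPq : IsProbabilityMeasure (volume.withDensity (dens q)) := dens_prob q hq1
  haveI : IsProbabilityMeasure (Measure.map M ℙ) :=
    Measure.isProbabilityMeasure_map hM.aemeasurable
  have hmap : Measure.map M ℙ = volume.withDensity (dens q) := by
    apply Measure.ext_of_Iic
    intro t
    rw [Measure.map_apply hM measurableSet_Iic, dens_Iic q hq1]
    have hset : M ⁻¹' Set.Iic t = ⋂ ij, U ij ⁻¹' Set.Iic t := by
      rw [hMdef]
      ext ω
      simp only [Set.mem_preimage, Set.mem_Iic, Set.mem_iInter]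
      exact ⟨fun h ij => le_trans (le_ciSup (f := fun ij => U ij ω) (Set.finite_range _).bddAbove ij) h,
             fun h => ciSup_le h⟩
    have hprod := hindep.measure_inter_preimage_eq_mul (S := Finset.univ)
      (sets := fun _ => Set.Iic t) (fun i _ => measurableSet_Iic)
    have hiInter : (⋂ ij ∈ (Finset.univ : Finset (Fin n × Fin N)), U ij ⁻¹' Set.Iic t) =
        ⋂ ij, U ij ⁻¹' Set.Iic t := by
      simp
    rw [hset, ← hiInter, hprod]
    have hfac : ∀ ij, ℙ (U ij ⁻¹' Set.Iic t) =
        ENNReal.ofReal ((min (max t 0) 1) ^ (p+1)) := by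
      intro ij
      rw [← Measure.map_apply (hmeas ij) measurableSet_Iic, hlaw' ij, dens_Iic (p+1) (by linarith)]
    simp only [hfac]
    rw [Finset.prod_const]
    have hcard : (Finset.univ : Finset (Fin n × Fin N)).card = n * N := by
      simp
    rw [hcard, ← ENNReal.ofReal_pow (Real.rpow_nonneg (le_min (le_max_right t 0) zero_le_one |>.trans_eq rfl) _)]
    congr 1
    rw [← Real.rpow_natCast ((min (max t 0) 1) ^ (p+1)) (n*N), ← Real.rpow_mul
      (le_min (le_max_right t 0) zero_le_one)]
    congr 1
    push_cast
    ring
  -- a.e. boundedness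
  have haeIcc : ∀ᵐ ω ∂ℙ, M ω ∈ Set.Icc (0:ℝ) 1 := by
    have h0 : ∀ᵐ x ∂(Measure.map M ℙ), x ∈ Set.Icc (0:ℝ) 1 := by
      rw [hmap, ae_iff]
      have hc : {x : ℝ | ¬ x ∈ Set.Icc (0:ℝ) 1} = (Set.Icc (0:ℝ) 1)ᶜ := rfl
      rw [hc, withDensity_apply _ measurableSet_Icc.compl]
      have : ∀ x ∈ (Set.Icc (0:ℝ) 1)ᶜ, dens q x = 0 := by
        intro x hx
        simp [dens, Set.indicator_apply, (Set.mem_compl_iff _ _).mp hx]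
      calc ∫⁻ x in (Set.Icc (0:ℝ) 1)ᶜ, dens q x
          = ∫⁻ _ in (Set.Icc (0:ℝ) 1)ᶜ, 0 := by
            exact setLIntegral_congr_fun measurableSet_Icc.compl
              this
        _ = 0 := lintegral_zero
    exact (ae_map_iff hM.aemeasurable measurableSet_Icc).mp h0
  -- rewrite the target function
  have hfun : (fun ω => ⨆ ij, R * U ij ω) = fun ω => R * M ω := by
    funext ω
    exact (Real.mul_iSup_of_nonneg hR.le _).symm
  rw [hfun]
  -- Memℒp
  have hX2 : MemLp (fun ω => R * M ω) 2 ℙ := by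
    apply MemLp.of_bound ((hM.const_mul R).aestronglyMeasurable) R
    filter_upwards [haeIcc] with ω hω
    rw [Real.norm_eq_abs, abs_mul, abs_of_pos hR]
    have : |M ω| ≤ 1 := abs_le.mpr ⟨by linarith [hω.1], hω.2⟩
    nlinarith
  rw [variance_eq_sub hX2]
  -- moments
  have hE1 : ∫ ω, R * M ω ∂ℙ = R * (q / (q + 1)) := by
    rw [integral_const_mul]
    congr 1
    have : ∫ ω, M ω ∂ℙ = ∫ x, x ^ 1 ∂(Measure.map M ℙ) := by
      rw [integral_map hM.aemeasurable]
      · simp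
      · exact (measurable_id.pow_const 1).aestronglyMeasurable
    rw [this, hmap, dens_moment q hq1 1]
    norm_num
  have hE2 : ∫ ω, (R * M ω) ^ 2 ∂ℙ = R ^ 2 * (q / (q + 2)) := by
    have h1 : (fun ω => (R * M ω) ^ 2) = fun ω => R ^ 2 * (M ω ^ 2) := by
      funext ω; ring
    rw [h1, integral_const_mul]
    congr 1
    have : ∫ ω, M ω ^ 2 ∂ℙ = ∫ x, x ^ 2 ∂(Measure.map M ℙ) := by
      rw [integral_map hM.aemeasurable]
      exact (measurable_id.pow_const 2).aestronglyMeasurable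
    rw [this, hmap, dens_moment q hq1 2]
    norm_num
  have hpow : (fun ω => R * M ω) ^ 2 = fun ω => (R * M ω) ^ 2 := by
    funext ω; simp [Pi.pow_apply]
  rw [hpow, hE2, hE1]
  have hq1' : q + 1 ≠ 0 := by positivity
  have hq2' : q + 2 ≠ 0 := by positivity
  field_simp
  ring
end

section
/- Let n and N be positive integers, let R > 0 and p > 1, and let Z_{ij} = R·U_{ij}, where the U_{ij} (1 ≤ i ≤ n, 1 ≤ j ≤ N) are i.i.d. random variables with probability density f(u) = (p + 1)u^p on [0, 1]. Let R̃₁ = max_{i,j} Z_{ij}. Then the mean squared error of R̃₁ as an estimator of R satisfies MSE(R̃₁) = E[(R̃₁ − R)²] = R²·2/((nN(p + 1) + 1)(nN(p + 1) + 2)). -/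
open MeasureTheory ProbabilityTheory Real

lemma aux_lint (c : ℝ) (hc : 1 < c) {m : ℝ} (hm0 : 0 ≤ m) :
    ∫⁻ x in Set.Icc (0:ℝ) m, ENNReal.ofReal (c * x ^ (c-1)) ∂volume
      = ENNReal.ofReal (m ^ c) := by
  have hint : IntegrableOn (fun x : ℝ => c * x ^ (c-1)) (Set.Icc 0 m) volume := by
    have h := (intervalIntegral.intervalIntegrable_rpow' (a := 0) (b := m) (r := c-1)
      (by linarith)).const_mul c
    rw [intervalIntegrable_iff, Set.uIoc_of_le hm0] at h
    rwa [integrableOn_Icc_iff_integrableOn_Ioc]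
  have hnn : 0 ≤ᵐ[volume.restrict (Set.Icc (0:ℝ) m)] fun x : ℝ => c * x ^ (c-1) := by
    filter_upwards [self_mem_ae_restrict (measurableSet_Icc)] with x hx
    exact mul_nonneg (by linarith) (Real.rpow_nonneg hx.1 _)
  rw [← ofReal_integral_eq_lintegral_ofReal hint hnn]
  congr 1
  rw [MeasureTheory.integral_Icc_eq_integral_Ioc,
    ← intervalIntegral.integral_of_le hm0, intervalIntegral.integral_const_mul,
    integral_rpow (Or.inl (by linarith))]
  have h0 : (0:ℝ) ^ (c - 1 + 1) = 0 := Real.zero_rpow (by linarith)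
  rw [h0]
  have : c - 1 + 1 = c := by ring
  rw [this]
  field_simp
  ring

lemma aux_cdf (c : ℝ) (hc : 1 < c) (t : ℝ) :
    (volume.withDensity fun u =>
        ENNReal.ofReal ((Set.Icc (0:ℝ) 1).indicator (fun v => c * v ^ (c-1)) u)) (Set.Iic t)
      = ENNReal.ofReal ((min (max t 0) 1) ^ c) := by
  rw [withDensity_apply _ measurableSet_Iic]
  have hind : ∀ x, ENNReal.ofReal ((Set.Icc (0:ℝ) 1).indicator (fun v => c * v ^ (c-1)) x)
      = (Set.Icc (0:ℝ) 1).indicator (fun v => ENNReal.ofReal (c * v ^ (c-1))) x := by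
    intro x; by_cases h : x ∈ Set.Icc (0:ℝ) 1 <;> simp [Set.indicator_apply, h]
  simp_rw [hind]
  have hIcc : Set.Icc (0:ℝ) 1 ∩ Set.Iic t = Set.Icc 0 (min 1 t) := by
    rw [← Set.Ici_inter_Iic, Set.inter_assoc, Set.Iic_inter_Iic, Set.Ici_inter_Iic]
  rw [lintegral_indicator measurableSet_Icc, Measure.restrict_restrict measurableSet_Icc, hIcc]
  rcases lt_or_ge t 0 with ht | ht
  · rw [Set.Icc_eq_empty (by rw [not_le]; exact lt_of_le_of_lt (min_le_right 1 t) ht), Measure.restrict_empty,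
      lintegral_zero_measure]
    rw [max_eq_right ht.le, min_eq_left zero_le_one, Real.zero_rpow (by linarith), ENNReal.ofReal_zero]
  · have hmin : min (max t 0) 1 = min 1 t := by rw [max_eq_left ht, min_comm]
    rw [hmin]
    exact aux_lint c hc (le_min zero_le_one ht)

lemma aux_integral (q : ℝ) (hq : 1 < q) :
    ∫ x in (0:ℝ)..1, q * x ^ (q-1) * (x-1)^2 = 2 / ((q+1)*(q+2)) := by
  have h1 : Set.EqOn (fun x : ℝ => q * x ^ (q-1) * (x-1)^2)
      (fun x : ℝ => q * x^(q+1) - (2*q) * x^q + q * x^(q-1)) (Set.uIcc (0:ℝ) 1) := by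
    intro x hx
    rw [Set.uIcc_of_le zero_le_one] at hx
    rcases eq_or_lt_of_le hx.1 with h0 | h0
    · simp only [← h0]
      rw [Real.zero_rpow (by linarith), Real.zero_rpow (by linarith), Real.zero_rpow (by linarith)]
      ring
    · have e1 : x ^ (q+1) = x^(q-1) * x^2 := by
        rw [show q + 1 = (q-1) + 2 by ring, Real.rpow_add h0]
        norm_num [Real.rpow_two]
      have e2 : x ^ q = x^(q-1) * x := by
        nth_rewrite 1 [show q = (q-1) + 1 by ring]
        rw [Real.rpow_add h0, Real.rpow_one]
      simp only [e1, e2]; ring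
  rw [intervalIntegral.integral_congr h1]
  have i1 : IntervalIntegrable (fun x : ℝ => x^(q+1)) volume 0 1 :=
    intervalIntegral.intervalIntegrable_rpow' (by linarith)
  have i2 : IntervalIntegrable (fun x : ℝ => x^q) volume 0 1 :=
    intervalIntegral.intervalIntegrable_rpow' (by linarith)
  have i3 : IntervalIntegrable (fun x : ℝ => x^(q-1)) volume 0 1 :=
    intervalIntegral.intervalIntegrable_rpow' (by linarith)
  rw [intervalIntegral.integral_add ((i1.const_mul q).sub (i2.const_mul (2*q))) (i3.const_mul q),
    intervalIntegral.integral_sub (i1.const_mul q) (i2.const_mul (2*q)),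
    intervalIntegral.integral_const_mul, intervalIntegral.integral_const_mul,
    intervalIntegral.integral_const_mul,
    integral_rpow (Or.inl (by linarith)), integral_rpow (Or.inl (by linarith)),
    integral_rpow (Or.inl (by linarith))]
  rw [Real.one_rpow, Real.one_rpow, Real.one_rpow, Real.zero_rpow (by linarith),
    Real.zero_rpow (by linarith), Real.zero_rpow (by linarith)]
  have hq0 : q ≠ 0 := by linarith
  have hq1 : q + 1 ≠ 0 := by linarith
  have hq2 : q + 2 ≠ 0 := by linarith
  have e : q - 1 + 1 = q := by ring
  rw [e]
  field_simp
  ring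

/-- If `U_{ij}` are i.i.d. with density `f(u) = (p+1)u^p` on `[0,1]` and `Z_{ij} = R·U_{ij}`,
then the MSE of the maximum `R̃₁ = max Z_{ij}` as an estimator of `R` equals
`R²·2/((nN(p+1)+1)(nN(p+1)+2))`. -/
theorem mse_max_power_density
    {Ω : Type*} [MeasureSpace Ω] [IsProbabilityMeasure (ℙ : Measure Ω)]
    (n N : ℕ) (hn : 0 < n) (hN : 0 < N) (R p : ℝ) (hR : 0 < R) (hp : 1 < p)
    (U : Fin n × Fin N → Ω → ℝ)
    (hmeas : ∀ ij, Measurable (U ij))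
    (hlaw : ∀ ij, Measure.map (U ij) ℙ =
      volume.withDensity
        (fun u => ENNReal.ofReal ((Set.Icc (0 : ℝ) 1).indicator (fun v => (p + 1) * v ^ p) u)))
    (hindep : iIndepFun U ℙ) :
    ∫ ω, ((⨆ ij, R * U ij ω) - R) ^ 2 ∂ℙ =
      R ^ 2 * (2 / (((n : ℝ) * N * (p + 1) + 1) * ((n : ℝ) * N * (p + 1) + 2))) := by
  haveI : Nonempty (Fin n) := ⟨⟨0, hn⟩⟩
  haveI : Nonempty (Fin N) := ⟨⟨0, hN⟩⟩
  set q : ℝ := (n : ℝ) * N * (p + 1) with hq_def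
  have hn1 : (1:ℝ) ≤ (n:ℝ) := Nat.one_le_cast.mpr hn
  have hN1 : (1:ℝ) ≤ (N:ℝ) := Nat.one_le_cast.mpr hN
  have hnN1 : (1:ℝ) ≤ (n:ℝ) * N := by nlinarith
  have hq : 1 < q := by nlinarith
  set M : Ω → ℝ := fun ω => ⨆ ij, U ij ω with hM_def
  have hM : Measurable M := by
    have h := Finset.measurable_sup' (s := (Finset.univ : Finset (Fin n × Fin N)))
      Finset.univ_nonempty (fun ij _ => hmeas ij)
    have hEq : M = Finset.univ.sup' Finset.univ_nonempty U := by
      funext ω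
      rw [Finset.sup'_apply, Finset.sup'_univ_eq_ciSup]
    rw [hEq]; exact h
  -- Step 1: rewrite integrand
  have hpt : ∀ ω, ((⨆ ij, R * U ij ω) - R) ^ 2 = R^2 * (M ω - 1)^2 := by
    intro ω
    rw [← mul_iSup_of_nonneg hR.le]
    ring
  simp_rw [hpt]
  rw [MeasureTheory.integral_const_mul]
  congr 1
  -- Step 2: law of M
  have hmap : Measure.map M ℙ = volume.withDensity
      (fun u => ENNReal.ofReal ((Set.Icc (0 : ℝ) 1).indicator (fun v => q * v ^ (q-1)) u)) := by
    haveI : IsProbabilityMeasure (Measure.map M ℙ) := Measure.isProbabilityMeasure_map hM.aemeasurable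
    refine Measure.ext_of_Iic _ _ (fun t => ?_)
    set m : ℝ := min (max t 0) 1 with hm_def
    have hm0 : 0 ≤ m := le_min (le_max_right t 0) zero_le_one
    have hpre : M ⁻¹' Set.Iic t = ⋂ ij ∈ (Finset.univ : Finset (Fin n × Fin N)),
        U ij ⁻¹' Set.Iic t := by
      ext ω
      simp only [Set.mem_preimage, Set.mem_Iic, Set.mem_iInter, Finset.mem_univ, forall_true_left]
      exact ciSup_le_iff ((Set.finite_range _).bddAbove)
    have hprod := (iIndepFun_iff_measure_inter_preimage_eq_mul.mp hindep)
      (Finset.univ : Finset (Fin n × Fin N)) (sets := fun _ => Set.Iic t)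
      (fun i _ => measurableSet_Iic)
    have hfactor : ∀ ij, ℙ (U ij ⁻¹' Set.Iic t) = ENNReal.ofReal (m ^ (p+1)) := by
      intro ij
      rw [← Measure.map_apply (hmeas ij) measurableSet_Iic, hlaw ij]
      have := aux_cdf (p+1) (by linarith) t
      simp only [show p + 1 - 1 = p by ring] at this
      rw [this]
    rw [Measure.map_apply hM measurableSet_Iic, hpre, hprod]
    simp only [hfactor, Finset.prod_const, Finset.card_univ, Fintype.card_prod, Fintype.card_fin]
    rw [← ENNReal.ofReal_pow (Real.rpow_nonneg hm0 _), ← Real.rpow_natCast (m ^ (p+1)) (n*N),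
      ← Real.rpow_mul hm0]
    rw [aux_cdf q hq t]
    congr 2
    push_cast
    ring
  -- Step 3: change of variables
  have hcont : Continuous (fun x : ℝ => (x - 1)^2) := by continuity
  have hchg : ∫ ω, (M ω - 1)^2 ∂ℙ = ∫ x, (x - 1)^2 ∂(Measure.map M ℙ) :=
    (integral_map hM.aemeasurable hcont.aestronglyMeasurable).symm
  rw [hchg, hmap]
  -- Step 4: withDensity integral
  set ind : ℝ → ℝ := (Set.Icc (0 : ℝ) 1).indicator (fun v => q * v ^ (q-1)) with hind_def
  have hind_nn : ∀ x, 0 ≤ ind x := by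
    intro x
    apply Set.indicator_nonneg
    intro v hv
    exact mul_nonneg (by linarith) (Real.rpow_nonneg hv.1 _)
  have hind_meas : Measurable ind := by
    apply Measurable.indicator _ measurableSet_Icc
    fun_prop
  have hf_meas : Measurable (fun x => (ind x).toNNReal) := hind_meas.real_toNNReal
  rw [show (fun u => ENNReal.ofReal (ind u)) = (fun u => (((ind u).toNNReal : NNReal) : ENNReal))
      from rfl]
  rw [integral_withDensity_eq_integral_smul hf_meas]
  have hsmul : ∀ x : ℝ, (ind x).toNNReal • (x - 1)^2 = ind x * (x - 1)^2 := by
    intro x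
    rw [NNReal.smul_def, Real.coe_toNNReal _ (hind_nn x), smul_eq_mul]
  simp_rw [hsmul]
  have hindm : ∀ x : ℝ, ind x * (x - 1)^2
      = (Set.Icc (0 : ℝ) 1).indicator (fun v => q * v ^ (q-1) * (v - 1)^2) x := by
    intro x
    by_cases h : x ∈ Set.Icc (0:ℝ) 1 <;> simp [hind_def, Set.indicator_apply, h]
  simp_rw [hindm]
  rw [integral_indicator measurableSet_Icc, MeasureTheory.integral_Icc_eq_integral_Ioc,
    ← intervalIntegral.integral_of_le zero_le_one, aux_integral q hq]
end
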